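/- If X is a finitely generated virtually abelian group and Y is a group with property (LR), then X × Y has property (LR). -/

import Mathlib

/-- `H` is a virtual retract of `G` if there is a finite-index subgroup `K` of `G`
containing `H` together with a homomorphism `K → H` restricting to the identity on `H`. -/
def IsVirtualRetract {G : Type*} [Group G] (H : Subgroup G) : Prop :=
  ∃ K : Subgroup G, K.FiniteIndex ∧ H ≤ K ∧
    ∃ ρ : K →* G, (∀ k : K, ρ k ∈ H) ∧ ∀ k : K, (k : G) ∈ H → ρ k = k

/-- A group has property (LR) if every finitely generated subgroup is a virtual retract. -/
def HasLR (G : Type*) [Group G] : Prop :=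
  ∀ H : Subgroup G, H.FG → IsVirtualRetract H

section Step

variable {G : Type*} [Group G]

/-- Composition step: if `M` is "virtually retracted onto" via `σ` defined on a finite index
subgroup `K₁`, and `H ≤ M` admits a retraction defined on `K₂` with finite relative index in `M`,
then `H` is a virtual retract of `G`. -/
lemma isVirtualRetract_step (H M K₁ K₂ : Subgroup G)
    (hK₁ : K₁.FiniteIndex) (hMK₁ : M ≤ K₁)
    (σ : ↥K₁ →* G) (hσM : ∀ k, σ k ∈ M) (hσfix : ∀ k : ↥K₁, (k : G) ∈ M → σ k = k)
    (hHM : H ≤ M) (hHK₂ : H ≤ K₂)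
    (hrel : K₂.relIndex M ≠ 0)
    (ρ₂ : ↥K₂ →* G) (hρ₂H : ∀ k, ρ₂ k ∈ H) (hρ₂fix : ∀ k : ↥K₂, (k : G) ∈ H → ρ₂ k = k) :
    IsVirtualRetract H := by
  have hrange : σ.range = M := by
    apply le_antisymm
    · rintro _ ⟨k, rfl⟩; exact hσM k
    · intro m hm; exact ⟨⟨m, hMK₁ hm⟩, hσfix _ hm⟩
  set K' : Subgroup ↥K₁ := K₂.comap σ with hK'def
  have hK'index : K'.index = K₂.relIndex M := by
    rw [hK'def, Subgroup.index_comap, hrange]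
  refine ⟨K'.map K₁.subtype, ?_, ?_, ?_⟩
  · constructor
    rw [Subgroup.index_map_subtype]
    exact mul_ne_zero (by rw [hK'index]; exact hrel) hK₁.index_ne_zero
  · intro h hh
    refine Subgroup.mem_map.mpr ⟨⟨h, hMK₁ (hHM hh)⟩, ?_, rfl⟩
    have : σ ⟨h, hMK₁ (hHM hh)⟩ ∈ K₂ := by
      rw [hσfix _ (hHM hh)]; exact hHK₂ hh
    exact this
  · have hinj : Function.Injective K₁.subtype := K₁.subtype_injective
    set e := Subgroup.equivMapOfInjective K' K₁.subtype hinj with he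
    have hecoe : ∀ w : ↥K', ((e w : ↥(K'.map K₁.subtype)) : G) = ((w : ↥K₁) : G) := by
      intro w
      exact Subgroup.coe_equivMapOfInjective_apply K' K₁.subtype hinj w
    let σ'' : ↥K' →* ↥K₂ :=
      { toFun := fun w => ⟨σ w.1, w.2⟩
        map_one' := by ext; simp
        map_mul' := by intro w₁ w₂; ext; simp }
    refine ⟨(ρ₂.comp σ'').comp e.symm.toMonoidHom, fun k => hρ₂H _, fun k hk => ?_⟩
    have h1 : (((e.symm k : ↥K') : ↥K₁) : G) = (k : G) := by
      have := hecoe (e.symm k)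
      rw [e.apply_symm_apply] at this; exact this.symm
    have hkM : (((e.symm k : ↥K') : ↥K₁) : G) ∈ M := by rw [h1]; exact hHM hk
    have h2 : (σ'' (e.symm k) : G) = (k : G) := by
      show σ (e.symm k).1 = (k : G)
      rw [hσfix _ hkM]; exact h1
    show ρ₂ (σ'' (e.symm k)) = (k : G)
    have h3 : σ'' (e.symm k) = ⟨(k : G), by rw [← h2]; exact (σ'' (e.symm k)).2⟩ :=
      Subtype.ext h2
    rw [h3]
    exact hρ₂fix _ hk

end Step

lemma module_retract {R M : Type*} [CommRing R] [IsDomain R] [IsPrincipalIdealRing R]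
    [AddCommGroup M] [Module R M] [Module.Finite R M] [Module.Free R M] (B : Submodule R M) :
    ∃ (S : Submodule R M) (D : R), D ≠ 0 ∧ B ≤ S ∧ (∀ x : M, D • x ∈ S) ∧
      ∃ τ : ↥S →ₗ[R] M, (∀ x, τ x ∈ B) ∧ ∀ x : ↥S, (x : M) ∈ B → τ x = (x : M) := by
  classical
  obtain ⟨n, o, hno, bO, bN, a, snf⟩ :=
    Submodule.exists_smith_normal_form_of_le (Module.Free.chooseBasis R M) B ⊤ le_top
  let bM : Module.Basis (Fin o) R M := bO.map (Submodule.topEquiv)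
  have hbM : ∀ j, bM j = ((bO j : ↥(⊤ : Submodule R M)) : M) := by
    intro j
    simp [bM, Module.Basis.map_apply]
  have ha : ∀ i, a i ≠ 0 := by
    intro i hai
    apply bN.ne_zero i
    have h0 : (bN i : M) = 0 := by rw [snf i, hai, zero_smul]
    exact Subtype.ext h0
  let d : Fin o → R := fun j => if h : (j : ℕ) < n then a ⟨j, h⟩ else 1
  have hd : ∀ j, d j ≠ 0 := by
    intro j
    by_cases h : (j : ℕ) < n <;> simp [d, h, ha]
  let c : Fin o → M := fun j => d j • bM j
  have hc : ∀ j, c j = d j • bM j := fun j => rfl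
  have hli : LinearIndependent R c := by
    rw [linearIndependent_iff']
    intro s g hg j hj
    have h2 : ∑ i ∈ s, (g i * d i) • bM i = 0 := by
      rw [← hg]
      apply Finset.sum_congr rfl
      intro i _
      rw [hc, mul_smul]
    have h3 := linearIndependent_iff'.mp bM.linearIndependent s (fun i => g i * d i) h2 j hj
    exact (mul_eq_zero.mp h3).resolve_right (hd j)
  refine ⟨Submodule.span R (Set.range c), ?_⟩
  set S : Submodule R M := Submodule.span R (Set.range c) with hS_def
  have hcS : ∀ j, c j ∈ S := fun j => Submodule.subset_span ⟨j, rfl⟩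
  have hceq : ∀ i : Fin n, (bN i : M) = c (Fin.castLE hno i) := by
    intro i
    have hlt : ((Fin.castLE hno i : Fin o) : ℕ) < n := i.2
    have hdi : d (Fin.castLE hno i) = a i := by
      simp only [d, hlt, dif_pos]
      congr 1
    rw [snf i, hc, hdi, hbM]
  have hBS : B ≤ S := by
    intro b hb
    have h2 : (⟨b, hb⟩ : ↥B) ∈ Submodule.span R (Set.range bN) := by
      rw [bN.span_eq]; trivial
    have h3 : b ∈ Submodule.map B.subtype (Submodule.span R (Set.range bN)) :=
      ⟨⟨b, hb⟩, h2, rfl⟩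
    rw [Submodule.map_span] at h3
    refine Submodule.span_le.mpr ?_ h3
    rintro _ ⟨_, ⟨i, rfl⟩, rfl⟩
    rw [Submodule.coe_subtype, hceq i]
    exact hcS _
  let bS : Module.Basis (Fin o) R ↥S := Module.Basis.span hli
  have hbS : ∀ j, (bS j : M) = c j := fun j => congrArg Subtype.val (Module.Basis.span_apply hli j)
  let vals : Fin o → ↥B := fun j => if h : (j : ℕ) < n then bN ⟨j, h⟩ else 0
  let τ : ↥S →ₗ[R] M := B.subtype.comp (bS.constr R vals)
  have hτB : ∀ x, τ x ∈ B := fun x => ((bS.constr R vals) x).2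
  have hfixmap : τ.comp (Submodule.inclusion hBS) = B.subtype := by
    apply Module.Basis.ext bN
    intro i
    have hlt : ((Fin.castLE hno i : Fin o) : ℕ) < n := i.2
    have h1 : (Submodule.inclusion hBS) (bN i) = bS (Fin.castLE hno i) := by
      apply Subtype.ext
      rw [hbS]
      exact hceq i
    rw [LinearMap.comp_apply, h1]
    show B.subtype ((bS.constr R vals) (bS (Fin.castLE hno i))) = _
    rw [Module.Basis.constr_basis]
    congr 1
    simp only [vals, hlt, dif_pos]
    congr 1
  have hτfix : ∀ x : ↥S, (x : M) ∈ B → τ x = (x : M) := by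
    intro x hx
    have h2 := LinearMap.congr_fun hfixmap ⟨(x : M), hx⟩
    rw [LinearMap.comp_apply] at h2
    have h1 : Submodule.inclusion hBS ⟨(x : M), hx⟩ = x := Subtype.ext rfl
    rw [h1] at h2
    exact h2
  refine ⟨∏ j, d j, Finset.prod_ne_zero_iff.mpr fun j _ => hd j, hBS, ?_, τ, hτB, hτfix⟩
  intro x
  rw [← Module.Basis.sum_repr bM x, Finset.smul_sum]
  apply Submodule.sum_mem
  intro j _
  obtain ⟨e, he⟩ : d j ∣ ∏ j, d j := Finset.dvd_prod_of_mem d (Finset.mem_univ j)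
  have h1 : (∏ j, d j) • (bM.repr x j • bM j) = (e * bM.repr x j) • c j := by
    rw [hc, smul_smul, smul_smul]
    congr 1
    rw [he]; ring
  rw [h1]
  exact Submodule.smul_mem S _ (hcS j)

/-- Non-equivariant retraction lemma for f.g. torsion-free abelian subgroups. -/
lemma base_retract {Xg : Type*} [Group Xg] (A : Subgroup Xg) (hAfg : Group.FG ↥A)
    (hcomm : ∀ a b : Xg, a ∈ A → b ∈ A → a * b = b * a) (hAfi : A.index ≠ 0)
    (htf : ∀ x ∈ A, ∀ k : ℕ, k ≠ 0 → x ^ k = 1 → x = 1)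
    (B : Subgroup Xg) (hBA : B ≤ A) :
    ∃ A₁ : Subgroup Xg, A₁ ≤ A ∧ A₁.index ≠ 0 ∧ B ≤ A₁ ∧
      ∃ t : Xg → Xg,
        (∀ x ∈ A₁, ∀ y ∈ A₁, t (x * y) = t x * t y) ∧
        (∀ x ∈ A₁, t x ∈ B) ∧ (∀ x ∈ B, t x = x) := by
  classical
  letI : CommGroup ↥A :=
    { (inferInstance : Group ↥A) with
      mul_comm := fun a b => Subtype.ext (hcomm a b a.2 b.2) }
  haveI hMF : Module.Finite ℤ (Additive ↥A) :=
    Module.Finite.iff_addGroup_fg.mpr (GroupFG.iff_add_fg.mp hAfg)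
  haveI : NoZeroSMulDivisors ℤ (Additive ↥A) := by
    constructor
    intro k x hkx
    by_contra hcon
    push_neg at hcon
    obtain ⟨hk, hx⟩ := hcon
    apply hx
    set u : ↥A := Additive.toMul x with hu
    have hzk : u ^ k = 1 := hkx
    have hnat : u ^ (k.natAbs) = 1 := by
      have : u ^ (k.natAbs : ℤ) = 1 := by
        rcases Int.natAbs_eq k with h | h
        · rw [← h]; exact hzk
        · rw [← neg_neg (k.natAbs : ℤ), ← h, zpow_neg, hzk, inv_one]
      rwa [zpow_natCast] at this
    have hcoe : ((u : Xg)) ^ (k.natAbs) = 1 := by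
      rw [← Subgroup.coe_pow, hnat, Subgroup.coe_one]
    have h1 : (u : Xg) = 1 := htf _ u.2 _ (Int.natAbs_ne_zero.mpr hk) hcoe
    have : u = 1 := Subtype.ext h1
    rw [hu] at this
    exact this
  obtain ⟨S, D, hD0, hBS, hDS, τ, hτB, hτfix⟩ :=
    module_retract (R := ℤ) (M := Additive ↥A)
      (AddSubgroup.toIntSubmodule ((B.subgroupOf A).toAddSubgroup))
  have hmemBM : ∀ u : ↥A, Additive.ofMul u ∈
      (AddSubgroup.toIntSubmodule ((B.subgroupOf A).toAddSubgroup) : Submodule ℤ (Additive ↥A))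
      ↔ (u : Xg) ∈ B := by
    intro u
    exact Subgroup.mem_subgroupOf
  -- the subgroup of ↥A corresponding to S
  let Sg : Subgroup ↥A :=
    { carrier := {u | Additive.ofMul u ∈ S}
      one_mem' := S.zero_mem
      mul_mem' := fun {u} {v} hu hv => S.add_mem hu hv
      inv_mem' := fun {u} hu => S.neg_mem hu }
  have hSgmem : ∀ u : ↥A, u ∈ Sg ↔ Additive.ofMul u ∈ S := fun _ => Iff.rfl
  let A₁ : Subgroup Xg := Sg.map A.subtype
  have hmem : ∀ x : Xg, x ∈ A₁ → ∃ h : x ∈ A, (⟨x, h⟩ : ↥A) ∈ Sg := by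
    rintro x ⟨u, hu, rfl⟩
    exact ⟨u.2, by simpa using hu⟩
  have hmem' : ∀ (x : Xg) (h : x ∈ A), (⟨x, h⟩ : ↥A) ∈ Sg → x ∈ A₁ := by
    intro x h hS
    exact ⟨⟨x, h⟩, hS, rfl⟩
  have hA₁A : A₁ ≤ A := by rintro x ⟨u, _, rfl⟩; exact u.2
  -- index
  have hSgindex : Sg.index ≠ 0 := by
    haveI : Group.FG ↥A := hAfg
    have hfin : Finite (↥A ⧸ Sg) := by
      haveI : Group.FG (↥A ⧸ Sg) :=
        Group.fg_of_surjective (f := QuotientGroup.mk' Sg) (QuotientGroup.mk'_surjective Sg)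
      apply CommGroup.finite_of_fg_torsion
      intro q
      rw [isOfFinOrder_iff_pow_eq_one]
      refine ⟨D.natAbs, Nat.pos_of_ne_zero (Int.natAbs_ne_zero.mpr hD0), ?_⟩
      obtain ⟨u, rfl⟩ := QuotientGroup.mk'_surjective Sg q
      show (QuotientGroup.mk u) ^ D.natAbs = 1
      rw [← QuotientGroup.mk_pow, QuotientGroup.eq_one_iff]
      rw [hSgmem]
      have h3 : Additive.ofMul (u ^ D.natAbs) = (D.natAbs : ℤ) • Additive.ofMul u := by
        rw [ofMul_pow, natCast_zsmul]
      rw [h3]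
      rcases Int.natAbs_eq D with h | h
      · rw [← h]; exact hDS _
      · have h2 : ((D.natAbs : ℤ)) • Additive.ofMul u = -(D • Additive.ofMul u) := by
          rw [← neg_smul]
          congr 1
          omega
        rw [h2]
        exact S.neg_mem (hDS _)
    haveI := hfin
    exact Subgroup.index_ne_zero_of_finite
  have hA₁i : A₁.index ≠ 0 := by
    rw [Subgroup.index_map_subtype]
    exact mul_ne_zero hSgindex hAfi
  have hBA₁ : B ≤ A₁ := by
    intro b hb
    refine hmem' b (hBA hb) ?_
    rw [hSgmem]
    exact hBS ((hmemBM _).mpr hb)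
  -- the retraction as a bare function
  let t : Xg → Xg := fun x =>
    if h : x ∈ A₁ then
      ((Additive.toMul (τ ⟨Additive.ofMul (⟨x, ((hmem x h).choose : x ∈ A)⟩ : ↥A),
        (hmem x h).choose_spec⟩) : ↥A) : Xg)
    else 1
  have ht_eq : ∀ (x : Xg) (hx : x ∈ A₁) (hA : x ∈ A) (hS : (⟨x, hA⟩ : ↥A) ∈ Sg),
      t x = ((Additive.toMul (τ ⟨Additive.ofMul (⟨x, hA⟩ : ↥A), hS⟩) : ↥A) : Xg) := by
    intro x hx hA hS
    simp only [t, dif_pos hx]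
  refine ⟨A₁, hA₁A, hA₁i, hBA₁, t, ?_, ?_, ?_⟩
  · -- multiplicative on A₁
    intro x hx y hy
    obtain ⟨hxA, hxS⟩ := hmem x hx
    obtain ⟨hyA, hyS⟩ := hmem y hy
    have hxyA : x * y ∈ A := A.mul_mem hxA hyA
    have hxyS : (⟨x * y, hxyA⟩ : ↥A) ∈ Sg := by
      have : (⟨x * y, hxyA⟩ : ↥A) = ⟨x, hxA⟩ * ⟨y, hyA⟩ := Subtype.ext rfl
      rw [this]
      exact Sg.mul_mem hxS hyS
    rw [ht_eq x hx hxA hxS, ht_eq y hy hyA hyS,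
      ht_eq (x * y) (A₁.mul_mem hx hy) hxyA hxyS]
    have e1 : (⟨Additive.ofMul (⟨x * y, hxyA⟩ : ↥A), hxyS⟩ : ↥S) =
        ⟨Additive.ofMul (⟨x, hxA⟩ : ↥A), hxS⟩ + ⟨Additive.ofMul (⟨y, hyA⟩ : ↥A), hyS⟩ :=
      Subtype.ext (by exact congrArg Additive.ofMul (Subtype.ext rfl))
    rw [e1, map_add]
    rfl
  · -- image in B
    intro x hx
    obtain ⟨hxA, hxS⟩ := hmem x hx
    rw [ht_eq x hx hxA hxS]
    exact (hmemBM _).mp (hτB ⟨Additive.ofMul (⟨x, hxA⟩ : ↥A), hxS⟩)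
  · -- fixes B
    intro x hx
    have hxA₁ : x ∈ A₁ := hBA₁ hx
    obtain ⟨hxA, hxS⟩ := hmem x hxA₁
    rw [ht_eq x hxA₁ hxA hxS]
    have hmemB : ((⟨Additive.ofMul (⟨x, hxA⟩ : ↥A), hxS⟩ : ↥S) : Additive ↥A) ∈
        (AddSubgroup.toIntSubmodule ((B.subgroupOf A).toAddSubgroup) : Submodule ℤ (Additive ↥A)) :=
      (hmemBM _).mpr hx
    rw [hτfix _ hmemB]
    rfl

/-- Equivariant virtual retraction onto `B` inside a f.g. torsion-free abelian normal subgroup. -/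
lemma averaged_retract {Xg : Type*} [Group Xg] [Group.FG Xg] (A : Subgroup Xg) [hN : A.Normal]
    (hAfi : A.FiniteIndex)
    (hcomm : ∀ a b : Xg, a ∈ A → b ∈ A → a * b = b * a)
    (htf : ∀ x ∈ A, ∀ k : ℕ, k ≠ 0 → x ^ k = 1 → x = 1)
    (P B : Subgroup Xg) (hBA : B ≤ A)
    (hBP : ∀ p ∈ P, ∀ b ∈ B, p * b * p⁻¹ ∈ B) :
    ∃ A₀ : Subgroup Xg, A₀ ≤ A ∧ A₀.FiniteIndex ∧
      (∀ p ∈ P, ∀ x ∈ A₀, p * x * p⁻¹ ∈ A₀) ∧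
      ∃ t : Xg → Xg,
        (∀ x ∈ A₀, ∀ y ∈ A₀, t (x * y) = t x * t y) ∧
        (∀ x ∈ A₀, t x ∈ B) ∧
        (∀ x, x ∈ B → x ∈ A₀ → t x = x) ∧
        (∀ p ∈ P, ∀ x ∈ A₀, t (p * x * p⁻¹) = p * t x * p⁻¹) := by
  classical
  haveI := hAfi
  obtain ⟨A₁, hA₁A, hA₁i, hBA₁, t₁, ht₁hom, ht₁B, ht₁fix⟩ :=
    base_retract A inferInstance hcomm hAfi.index_ne_zero htf B hBA
  letI : CommGroup ↥B :=
    { (inferInstance : Group ↥B) with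
      mul_comm := fun a b => Subtype.ext (hcomm a b (hBA a.2) (hBA b.2)) }
  have hconj : ∀ c u : Xg, c ∈ A → u ∈ A → u * c * u⁻¹ = c := by
    intro c u hc hu
    calc u * c * u⁻¹ = u * (c * u⁻¹) := by group
      _ = u * (u⁻¹ * c) := by rw [hcomm c u⁻¹ hc (A.inv_mem hu)]
      _ = c := by group
  have hconj' : ∀ c u : Xg, c ∈ A → u ∈ A → u⁻¹ * c * u = c := by
    intro c u hc hu
    have := hconj c u⁻¹ hc (A.inv_mem hu)
    simpa using this
  set U : Subgroup ↥P := A.subgroupOf P with hU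
  haveI hfinΔ : Finite (↥P ⧸ U) := by
    refine Finite.of_injective (QuotientGroup.map U A P.subtype (show U ≤ A.comap P.subtype from le_rfl)) ?_
    intro q1 q2 hq
    obtain ⟨p1, rfl⟩ := QuotientGroup.mk_surjective q1
    obtain ⟨p2, rfl⟩ := QuotientGroup.mk_surjective q2
    rw [QuotientGroup.map_mk, QuotientGroup.map_mk, QuotientGroup.eq] at hq
    rw [QuotientGroup.eq]
    simpa [hU, Subgroup.mem_subgroupOf] using hq
  haveI : Fintype (↥P ⧸ U) := Fintype.ofFinite _
  haveI : Nonempty (↥P ⧸ U) := ⟨QuotientGroup.mk 1⟩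
  set rep : (↥P ⧸ U) → ↥P := Quotient.out with hrep_def
  have hrep : ∀ δ : ↥P ⧸ U, (QuotientGroup.mk (rep δ) : ↥P ⧸ U) = δ := fun δ => Quotient.out_eq δ
  -- the subgroup A₂
  set A₂ : Subgroup Xg :=
    { carrier := {x | x ∈ A ∧ ∀ p ∈ P, p * x * p⁻¹ ∈ A₁}
      one_mem' := ⟨A.one_mem, fun p _ => by simpa using A₁.one_mem⟩
      mul_mem' := by
        rintro x y ⟨hxA, hx⟩ ⟨hyA, hy⟩
        refine ⟨A.mul_mem hxA hyA, fun p hp => ?_⟩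
        have h1 : p * (x * y) * p⁻¹ = (p * x * p⁻¹) * (p * y * p⁻¹) := by group
        rw [h1]; exact A₁.mul_mem (hx p hp) (hy p hp)
      inv_mem' := by
        rintro x ⟨hxA, hx⟩
        refine ⟨A.inv_mem hxA, fun p hp => ?_⟩
        have h1 : p * x⁻¹ * p⁻¹ = (p * x * p⁻¹)⁻¹ := by group
        rw [h1]; exact A₁.inv_mem (hx p hp) } with hA₂_def
  have hA₂mem : ∀ x : Xg, x ∈ A₂ ↔ (x ∈ A ∧ ∀ p ∈ P, p * x * p⁻¹ ∈ A₁) := fun x => Iff.rfl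
  have hA₂A : A₂ ≤ A := fun x hx => hx.1
  have hA₂P : ∀ p ∈ P, ∀ x ∈ A₂, p * x * p⁻¹ ∈ A₂ := by
    rintro p hp x ⟨hxA, hx⟩
    refine ⟨hN.conj_mem x hxA p, fun q hq => ?_⟩
    have h1 : q * (p * x * p⁻¹) * q⁻¹ = (q * p) * x * (q * p)⁻¹ := by group
    rw [h1]; exact hx (q * p) (P.mul_mem hq hp)
  haveI hA₂fi : A₂.FiniteIndex := by
    have hle : A ⊓ (⨅ δ : ↥P ⧸ U, A₁.comap (MulAut.conj ((rep δ : Xg))).toMonoidHom) ≤ A₂ := by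
      intro x hx0
      rw [Subgroup.mem_inf] at hx0
      obtain ⟨hxA, hx⟩ := hx0
      rw [Subgroup.mem_iInf] at hx
      refine ⟨hxA, fun p hp => ?_⟩
      set δ : ↥P ⧸ U := QuotientGroup.mk (⟨p, hp⟩ : ↥P) with hδ
      have h1 : (QuotientGroup.mk (rep δ) : ↥P ⧸ U) = QuotientGroup.mk (⟨p, hp⟩ : ↥P) := by
        rw [hrep]
      rw [QuotientGroup.eq] at h1
      set u : ↥P := (rep δ)⁻¹ * ⟨p, hp⟩ with hu'
      have huA : (u : Xg) ∈ A := h1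
      have hpx : p = (rep δ : Xg) * (u : Xg) := by
        rw [hu']
        push_cast
        group
      have hcm : (u : Xg) * x * (u : Xg)⁻¹ = x := hconj x (u : Xg) hxA huA
      have h2 := hx δ
      rw [Subgroup.mem_comap] at h2
      have h3 : (MulAut.conj ((rep δ : Xg))).toMonoidHom x = (rep δ : Xg) * x * (rep δ : Xg)⁻¹ := by
        simp [MulAut.conj_apply]
      rw [h3] at h2
      have h4 : p * x * p⁻¹ = (rep δ : Xg) * ((u : Xg) * x * (u : Xg)⁻¹) * (rep δ : Xg)⁻¹ := by
        rw [hpx]; group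
      rw [h4, hcm]
      exact h2
    haveI hinst : ∀ δ : ↥P ⧸ U, (A₁.comap (MulAut.conj ((rep δ : Xg))).toMonoidHom).FiniteIndex := by
      intro δ
      constructor
      rw [Subgroup.index_comap]
      have hsurj : Function.Surjective (MulAut.conj ((rep δ : Xg))).toMonoidHom :=
        (MulAut.conj ((rep δ : Xg))).surjective
      rw [MonoidHom.range_eq_top.mpr hsurj, Subgroup.relIndex_top_right]
      exact hA₁i
    haveI h5 : (⨅ δ : ↥P ⧸ U, A₁.comap (MulAut.conj ((rep δ : Xg))).toMonoidHom).FiniteIndex :=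
      Subgroup.finiteIndex_iInf fun δ => hinst δ
    have hdvd := Subgroup.index_dvd_of_le hle
    constructor
    intro h0
    rw [h0] at hdvd
    exact (inferInstance : (A ⊓ ⨅ δ : ↥P ⧸ U,
      A₁.comap (MulAut.conj ((rep δ : Xg))).toMonoidHom).FiniteIndex).index_ne_zero
      (Nat.eq_zero_of_zero_dvd hdvd)
  haveI hA₂fg : Group.FG ↥A₂ := Subgroup.fg_of_index_ne_zero A₂
  -- the summand function
  have hBmem : ∀ (g : ↥P) (x : Xg), (g : Xg) * x * (g : Xg)⁻¹ ∈ A₁ →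
      (g : Xg)⁻¹ * (t₁ ((g : Xg) * x * (g : Xg)⁻¹)) * (g : Xg) ∈ B := by
    intro g x h
    have hb := ht₁B _ h
    have h2 := hBP (g : Xg)⁻¹ (P.inv_mem g.2) _ hb
    simpa using h2
  set sfun : ↥P → Xg → ↥B := fun g x =>
    if h : (g : Xg) * x * (g : Xg)⁻¹ ∈ A₁ then ⟨_, hBmem g x h⟩ else 1 with hsfun_def
  have hA₂cond : ∀ (g : ↥P) (x : Xg), x ∈ A₂ → (g : Xg) * x * (g : Xg)⁻¹ ∈ A₁ :=
    fun g x hx => hx.2 (g : Xg) g.2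
  have L1 : ∀ (g : ↥P) (x : Xg), x ∈ A₂ →
      (sfun g x : Xg) = (g : Xg)⁻¹ * (t₁ ((g : Xg) * x * (g : Xg)⁻¹)) * (g : Xg) := by
    intro g x hx
    rw [hsfun_def]
    simp only [dif_pos (hA₂cond g x hx)]
  have L2 : ∀ (g u : ↥P), (u : Xg) ∈ A → ∀ x : Xg, x ∈ A₂ → sfun (g * u) x = sfun g x := by
    intro g u huA x hx
    apply Subtype.ext
    rw [L1 _ _ hx, L1 _ _ hx]
    have harg : ((g * u : ↥P) : Xg) * x * ((g * u : ↥P) : Xg)⁻¹ =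
        (g : Xg) * x * (g : Xg)⁻¹ := by
      push_cast
      have hcm : (u : Xg) * x * (u : Xg)⁻¹ = x := hconj x (u : Xg) (hA₂A hx) huA
      calc (g : Xg) * (u : Xg) * x * ((g : Xg) * (u : Xg))⁻¹
          = (g : Xg) * ((u : Xg) * x * (u : Xg)⁻¹) * (g : Xg)⁻¹ := by group
        _ = (g : Xg) * x * (g : Xg)⁻¹ := by rw [hcm]
    rw [harg]
    set b := t₁ ((g : Xg) * x * (g : Xg)⁻¹) with hb
    have hbB : b ∈ B := ht₁B _ (hA₂cond g x hx)
    have hbA : b ∈ A := hBA hbB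
    push_cast
    have hcm2 : (u : Xg)⁻¹ * ((g : Xg)⁻¹ * b * (g : Xg)) * (u : Xg) =
        (g : Xg)⁻¹ * b * (g : Xg) := by
      have hgB : (g : Xg)⁻¹ * b * (g : Xg) ∈ B := by
        have := hBP (g : Xg)⁻¹ (P.inv_mem g.2) b hbB
        simpa using this
      exact hconj' ((g : Xg)⁻¹ * b * (g : Xg)) (u : Xg) (hBA hgB) huA
    calc ((g : Xg) * (u : Xg))⁻¹ * b * ((g : Xg) * (u : Xg))
        = (u : Xg)⁻¹ * ((g : Xg)⁻¹ * b * (g : Xg)) * (u : Xg) := by group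
      _ = (g : Xg)⁻¹ * b * (g : Xg) := hcm2
  have L3 : ∀ (g : ↥P) (x y : Xg), x ∈ A₂ → y ∈ A₂ →
      sfun g (x * y) = sfun g x * sfun g y := by
    intro g x y hx hy
    apply Subtype.ext
    rw [Subgroup.coe_mul, L1 _ _ (A₂.mul_mem hx hy), L1 _ _ hx, L1 _ _ hy]
    have harg : (g : Xg) * (x * y) * (g : Xg)⁻¹ =
        ((g : Xg) * x * (g : Xg)⁻¹) * ((g : Xg) * y * (g : Xg)⁻¹) := by group
    rw [harg, ht₁hom _ (hA₂cond g x hx) _ (hA₂cond g y hy)]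
    group
  have L4 : ∀ (g p : ↥P) (x : Xg), x ∈ A₂ →
      (sfun g ((p : Xg) * x * (p : Xg)⁻¹) : Xg) = (p : Xg) * (sfun (g * p) x : Xg) * (p : Xg)⁻¹ := by
    intro g p x hx
    rw [L1 _ _ (hA₂P (p : Xg) p.2 x hx), L1 _ _ hx]
    have harg : (g : Xg) * ((p : Xg) * x * (p : Xg)⁻¹) * (g : Xg)⁻¹ =
        ((g * p : ↥P) : Xg) * x * ((g * p : ↥P) : Xg)⁻¹ := by
      push_cast; group
    rw [harg]
    push_cast
    group
  have L5 : ∀ (g : ↥P) (x : Xg) (hxB : x ∈ B), x ∈ A₂ → sfun g x = ⟨x, hxB⟩ := by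
    intro g x hxB hx
    apply Subtype.ext
    rw [L1 _ _ hx]
    have hgB : (g : Xg) * x * (g : Xg)⁻¹ ∈ B := hBP (g : Xg) g.2 x hxB
    rw [ht₁fix _ hgB]
    group
  set SΔ : (↥P ⧸ U) → Xg → ↥B := fun δ x => sfun (rep δ) x with hSΔ_def
  have L6 : ∀ (g : ↥P) (x : Xg), x ∈ A₂ → SΔ (QuotientGroup.mk g) x = sfun g x := by
    intro g x hx
    rw [hSΔ_def]
    have h1 : (QuotientGroup.mk (rep (QuotientGroup.mk g)) : ↥P ⧸ U) = QuotientGroup.mk g :=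
      hrep _
    rw [QuotientGroup.eq] at h1
    have h2 : g = rep (QuotientGroup.mk g) * ((rep (QuotientGroup.mk g))⁻¹ * g) := by group
    have h3 := L2 (rep (QuotientGroup.mk g)) ((rep (QuotientGroup.mk g))⁻¹ * g) h1 x hx
    rw [← h2] at h3
    exact h3.symm
  set Sf : Xg → ↥B := fun x => ∏ δ : ↥P ⧸ U, SΔ δ x with hSf_def
  set nΔ : ℕ := Fintype.card (↥P ⧸ U) with hnΔ_def
  have hnΔ : nΔ ≠ 0 := Fintype.card_ne_zero
  have P1 : ∀ x y : Xg, x ∈ A₂ → y ∈ A₂ → Sf (x * y) = Sf x * Sf y := by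
    intro x y hx hy
    rw [hSf_def, ← Finset.prod_mul_distrib]
    exact Finset.prod_congr rfl fun δ _ => L3 (rep δ) x y hx hy
  have P2 : ∀ (x : Xg) (hxB : x ∈ B), x ∈ A₂ → Sf x = ⟨x, hxB⟩ ^ nΔ := by
    intro x hxB hx
    show (∏ δ : ↥P ⧸ U, SΔ δ x) = ⟨x, hxB⟩ ^ nΔ
    have h6 : (∏ δ : ↥P ⧸ U, SΔ δ x) = ∏ _δ : ↥P ⧸ U, (⟨x, hxB⟩ : ↥B) :=
      Finset.prod_congr rfl fun δ _ => L5 (rep δ) x hxB hx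
    rw [h6, Finset.prod_const, Finset.card_univ, hnΔ_def]
  have P3 : ∀ (p : ↥P) (x : Xg), x ∈ A₂ →
      ((Sf ((p : Xg) * x * (p : Xg)⁻¹)) : Xg) = (p : Xg) * (Sf x : Xg) * (p : Xg)⁻¹ := by
    intro p x hx
    let cB : ↥B →* ↥B := MonoidHom.mk'
      (fun b => ⟨(p : Xg) * (b : Xg) * (p : Xg)⁻¹, hBP (p : Xg) p.2 (b : Xg) b.2⟩)
      (by intro b c; apply Subtype.ext; push_cast; group)
    have step : ∀ δ : ↥P ⧸ U, SΔ δ ((p : Xg) * x * (p : Xg)⁻¹) =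
        cB (SΔ (δ * QuotientGroup.mk p) x) := by
      intro δ
      apply Subtype.ext
      have h1 : SΔ (δ * QuotientGroup.mk p) x = sfun (rep δ * p) x := by
        have h2 : (δ * QuotientGroup.mk p : ↥P ⧸ U) = QuotientGroup.mk (rep δ * p) := by
          conv_lhs => rw [← hrep δ]
          rfl
        rw [h2, L6 _ _ hx]
      rw [h1]
      show (sfun (rep δ) ((p : Xg) * x * (p : Xg)⁻¹) : Xg)
          = (p : Xg) * (sfun (rep δ * p) x : Xg) * (p : Xg)⁻¹
      exact L4 (rep δ) p x hx
    show ((∏ δ : ↥P ⧸ U, SΔ δ ((p : Xg) * x * (p : Xg)⁻¹) : ↥B) : Xg)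
        = (p : Xg) * ((∏ δ : ↥P ⧸ U, SΔ δ x : ↥B) : Xg) * (p : Xg)⁻¹
    have h4 : (∏ δ : ↥P ⧸ U, SΔ δ ((p : Xg) * x * (p : Xg)⁻¹))
        = ∏ δ : ↥P ⧸ U, cB (SΔ (δ * QuotientGroup.mk p) x) :=
      Finset.prod_congr rfl fun δ _ => step δ
    have h5 : (∏ δ : ↥P ⧸ U, SΔ (δ * QuotientGroup.mk p) x) = ∏ δ : ↥P ⧸ U, SΔ δ x := by
      exact Fintype.prod_equiv (Equiv.mulRight (QuotientGroup.mk p : ↥P ⧸ U))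
        (fun δ => SΔ (δ * QuotientGroup.mk p) x) (fun δ => SΔ δ x) (fun δ => rfl)
    rw [h4, ← map_prod, h5]
    rfl
  have hSf1 : Sf 1 = 1 := by
    have h0 := P2 1 B.one_mem A₂.one_mem
    have h1 : (⟨1, B.one_mem⟩ : ↥B) = 1 := rfl
    rw [h0, h1, one_pow]
  have hSfinv : ∀ x : Xg, x ∈ A₂ → Sf x⁻¹ = (Sf x)⁻¹ := by
    intro x hx
    have h1 : Sf x⁻¹ * Sf x = 1 := by
      rw [← P1 _ _ (A₂.inv_mem hx) hx, inv_mul_cancel, hSf1]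
    exact eq_inv_of_mul_eq_one_left h1
  have hSfpow : ∀ (x : Xg) (_ : x ∈ A₂) (k : ℕ), Sf (x ^ k) = (Sf x) ^ k := by
    intro x hx k
    induction k with
    | zero => simpa using hSf1
    | succ k ih =>
      rw [pow_succ, pow_succ, P1 _ _ (A₂.pow_mem hx k) hx, ih]
  -- uniqueness of nΔ-th roots in B
  have huniq : ∀ b b' : Xg, b ∈ B → b' ∈ B → b ^ nΔ = b' ^ nΔ → b = b' := by
    intro b b' hb hb' hpow
    have hcm : Commute b⁻¹ b' := hcomm b⁻¹ b' (A.inv_mem (hBA hb)) (hBA hb')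
    have h1 : (b⁻¹ * b') ^ nΔ = 1 := by
      rw [hcm.mul_pow, inv_pow, hpow]
      group
    have h2 := htf (b⁻¹ * b') (A.mul_mem (A.inv_mem (hBA hb)) (hBA hb')) nΔ hnΔ h1
    have h3 : b * (b⁻¹ * b') = b * 1 := by rw [h2]
    rw [mul_one] at h3
    rw [← h3]
    group
  -- the subgroup A₀
  set A₀ : Subgroup Xg :=
    { carrier := {x | x ∈ A₂ ∧ ∃ b ∈ B, b ^ nΔ = ((Sf x : ↥B) : Xg)}
      one_mem' := ⟨A₂.one_mem, 1, B.one_mem, by rw [one_pow, hSf1]; rfl⟩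
      mul_mem' := by
        rintro x y ⟨hx, b1, hb1, hb1e⟩ ⟨hy, b2, hb2, hb2e⟩
        refine ⟨A₂.mul_mem hx hy, b1 * b2, B.mul_mem hb1 hb2, ?_⟩
        have hcm : Commute b1 b2 := hcomm b1 b2 (hBA hb1) (hBA hb2)
        have hS : Sf (x * y) = Sf x * Sf y := P1 x y hx hy
        rw [hS, hcm.mul_pow, hb1e, hb2e]
        push_cast
        rfl
      inv_mem' := by
        rintro x ⟨hx, b, hb, hbe⟩
        refine ⟨A₂.inv_mem hx, b⁻¹, B.inv_mem hb, ?_⟩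
        rw [inv_pow, hbe, hSfinv x hx]
        push_cast
        rfl } with hA₀_def
  have hA₀mem : ∀ x : Xg, x ∈ A₀ ↔ (x ∈ A₂ ∧ ∃ b ∈ B, b ^ nΔ = ((Sf x : ↥B) : Xg)) :=
    fun x => Iff.rfl
  have hA₀A₂ : A₀ ≤ A₂ := fun x hx => hx.1
  have hA₀A : A₀ ≤ A := fun x hx => hA₂A (hA₀A₂ hx)
  have hA₀P : ∀ p ∈ P, ∀ x ∈ A₀, p * x * p⁻¹ ∈ A₀ := by
    rintro p hp x ⟨hx2, b, hbB, hbe⟩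
    refine ⟨hA₂P p hp x hx2, p * b * p⁻¹, hBP p hp b hbB, ?_⟩
    rw [conj_pow, hbe]
    exact (P3 ⟨p, hp⟩ x hx2).symm
  haveI hA₀fi : A₀.FiniteIndex := by
    letI : CommGroup ↥A₂ :=
      { (inferInstance : Group ↥A₂) with
        mul_comm := fun a b => Subtype.ext (hcomm a b (hA₂A a.2) (hA₂A b.2)) }
    set W : Subgroup Xg := Subgroup.map A₂.subtype (powMonoidHom nΔ : ↥A₂ →* ↥A₂).range
      with hW_def
    have hWle : W ≤ A₀ := by
      rintro x ⟨w, ⟨z, rfl⟩, rfl⟩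
      have h2 : A₂.subtype (powMonoidHom nΔ z) = (z : Xg) ^ nΔ := by
        show ((z ^ nΔ : ↥A₂) : Xg) = (z : Xg) ^ nΔ
        push_cast
        rfl
      rw [h2]
      refine ⟨A₂.pow_mem z.2 nΔ, ((Sf (z : Xg) : ↥B) : Xg), (Sf (z : Xg)).2, ?_⟩
      rw [hSfpow (z : Xg) z.2 nΔ]
      push_cast
      rfl
    have hWi : W.index ≠ 0 := by
      rw [hW_def, Subgroup.index_map_subtype]
      refine mul_ne_zero ?_ hA₂fi.index_ne_zero
      have hfin : Finite (↥A₂ ⧸ (powMonoidHom nΔ : ↥A₂ →* ↥A₂).range) := by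
        haveI : Group.FG (↥A₂ ⧸ (powMonoidHom nΔ : ↥A₂ →* ↥A₂).range) :=
          Group.fg_of_surjective (f := QuotientGroup.mk' _) (QuotientGroup.mk'_surjective _)
        apply CommGroup.finite_of_fg_torsion
        intro q
        rw [isOfFinOrder_iff_pow_eq_one]
        refine ⟨nΔ, Nat.pos_of_ne_zero hnΔ, ?_⟩
        obtain ⟨z, rfl⟩ := QuotientGroup.mk'_surjective _ q
        show (QuotientGroup.mk z) ^ nΔ = 1
        rw [← QuotientGroup.mk_pow, QuotientGroup.eq_one_iff]
        exact ⟨z, rfl⟩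
      haveI := hfin
      exact Subgroup.index_ne_zero_of_finite
    have hdvd := Subgroup.index_dvd_of_le hWle
    constructor
    intro h0
    rw [h0] at hdvd
    exact hWi (Nat.eq_zero_of_zero_dvd hdvd)
  -- the map t
  set t : Xg → Xg := fun x =>
    if h : ∃ b ∈ B, b ^ nΔ = ((Sf x : ↥B) : Xg) then h.choose else 1 with ht_def
  have ht_spec : ∀ x ∈ A₀, t x ∈ B ∧ (t x) ^ nΔ = ((Sf x : ↥B) : Xg) := by
    rintro x ⟨hx2, hex⟩
    rw [ht_def]
    simp only [dif_pos hex]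
    exact ⟨hex.choose_spec.1, hex.choose_spec.2⟩
  refine ⟨A₀, hA₀A, hA₀fi, hA₀P, t, ?_, ?_, ?_, ?_⟩
  · intro x hx y hy
    obtain ⟨hxB, hxe⟩ := ht_spec x hx
    obtain ⟨hyB, hye⟩ := ht_spec y hy
    obtain ⟨hxyB, hxye⟩ := ht_spec (x * y) (A₀.mul_mem hx hy)
    have hcm : Commute (t x) (t y) := hcomm (t x) (t y) (hBA hxB) (hBA hyB)
    refine huniq _ _ hxyB (B.mul_mem hxB hyB) ?_
    calc t (x * y) ^ nΔ = ((Sf (x * y) : ↥B) : Xg) := hxye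
      _ = ((Sf x * Sf y : ↥B) : Xg) := by rw [P1 x y (hA₀A₂ hx) (hA₀A₂ hy)]
      _ = ((Sf x : ↥B) : Xg) * ((Sf y : ↥B) : Xg) := by push_cast; rfl
      _ = t x ^ nΔ * t y ^ nΔ := by rw [hxe, hye]
      _ = (t x * t y) ^ nΔ := (hcm.mul_pow nΔ).symm
  · intro x hx
    exact (ht_spec x hx).1
  · intro x hxB hx
    obtain ⟨htB', hte⟩ := ht_spec x hx
    refine huniq _ _ htB' hxB ?_
    rw [hte, P2 x hxB (hA₀A₂ hx)]
    push_cast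
    rfl
  · intro p hp x hx
    obtain ⟨htB', hte⟩ := ht_spec x hx
    obtain ⟨htB2, hte2⟩ := ht_spec _ (hA₀P p hp x hx)
    refine huniq _ _ htB2 (hBP p hp _ htB') ?_
    rw [hte2, conj_pow, hte]
    exact P3 ⟨p, hp⟩ x (hA₀A₂ hx)

/-- From a finite-index abelian subgroup, get a normal, finite-index, torsion-free
abelian subgroup. -/
lemma exists_good_abelian {X : Type*} [Group X] [Group.FG X] (A : Subgroup X)
    (hA : A.FiniteIndex) (hab : ∀ a b : ↥A, a * b = b * a) :
    ∃ As : Subgroup X, As.Normal ∧ As.FiniteIndex ∧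
      (∀ a b : X, a ∈ As → b ∈ As → a * b = b * a) ∧
      (∀ x ∈ As, ∀ k : ℕ, k ≠ 0 → x ^ k = 1 → x = 1) := by
  classical
  haveI := hA
  set C : Subgroup X := A.normalCore with hC_def
  haveI hCN : C.Normal := Subgroup.normalCore_normal A
  haveI hCfi : C.FiniteIndex := Subgroup.finiteIndex_normalCore A
  have hCA : C ≤ A := A.normalCore_le
  have hCcomm : ∀ a b : X, a ∈ C → b ∈ C → a * b = b * a := by
    intro a b ha hb
    have := hab ⟨a, hCA ha⟩ ⟨b, hCA hb⟩
    exact congrArg Subtype.val this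
  letI : CommGroup ↥C :=
    { (inferInstance : Group ↥C) with
      mul_comm := fun a b => Subtype.ext (hCcomm a b a.2 b.2) }
  haveI hCfg : Group.FG ↥C := Subgroup.fg_of_index_ne_zero C
  haveI hMF : Module.Finite ℤ (Additive ↥C) :=
    Module.Finite.iff_addGroup_fg.mpr (GroupFG.iff_add_fg.mp hCfg)
  haveI : IsNoetherian ℤ (Additive ↥C) := isNoetherian_of_isNoetherianRing_of_finite ℤ _
  -- the torsion submodule is finite
  set T : Submodule ℤ (Additive ↥C) := Submodule.torsion ℤ (Additive ↥C) with hT_def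
  have hTfg : T.FG := IsNoetherian.noetherian T
  haveI : Module.Finite ℤ ↥T := Module.Finite.iff_fg.mpr hTfg
  haveI hTfin : Finite ↥T := Module.finite_of_fg_torsion ↥T (Submodule.torsion_isTorsion)
  set m : ℕ := Nat.card ↥T with hm_def
  have hm : m ≠ 0 := Nat.card_ne_zero.mpr ⟨⟨0, T.zero_mem⟩, hTfin⟩
  have hkill : ∀ c : ↥C, IsOfFinOrder c → c ^ m = 1 := by
    intro c hc
    obtain ⟨k, hk, hck⟩ := isOfFinOrder_iff_pow_eq_one.mp hc
    have hT : Additive.ofMul c ∈ T := by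
      refine ⟨⟨(k : ℤ), ?_⟩, ?_⟩
      · simp only [mem_nonZeroDivisors_iff_ne_zero]
        exact_mod_cast hk.ne'
      · show (k : ℤ) • Additive.ofMul c = 0
        rw [natCast_zsmul]
        show Additive.ofMul (c ^ k) = 0
        rw [hck]
        rfl
    have h1 : m • (⟨Additive.ofMul c, hT⟩ : ↥T) = 0 := by
      rw [hm_def]
      exact card_nsmul_eq_zero'
    have h2 : m • Additive.ofMul c = 0 := congrArg Subtype.val h1
    have h3 : Additive.ofMul (c ^ m) = 0 := by
      rw [ofMul_pow]
      exact h2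
    exact h3
  set As : Subgroup X := Subgroup.map C.subtype (powMonoidHom m : ↥C →* ↥C).range with hAs_def
  have hAsC : As ≤ C := by rintro x ⟨u, _, rfl⟩; exact u.2
  have hmemAs : ∀ x : X, x ∈ As ↔ ∃ c : ↥C, ((c ^ m : ↥C) : X) = x := by
    intro x
    constructor
    · rintro ⟨u, ⟨c, rfl⟩, rfl⟩; exact ⟨c, rfl⟩
    · rintro ⟨c, rfl⟩; exact ⟨c ^ m, ⟨c, rfl⟩, rfl⟩
  refine ⟨As, ?_, ?_, ?_, ?_⟩
  · constructor
    intro a ha g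
    obtain ⟨c, rfl⟩ := (hmemAs a).mp ha
    refine (hmemAs _).mpr ⟨⟨g * (c : X) * g⁻¹, hCN.conj_mem (c : X) c.2 g⟩, ?_⟩
    push_cast
    rw [conj_pow]
  · constructor
    rw [hAs_def, Subgroup.index_map_subtype]
    refine mul_ne_zero ?_ hCfi.index_ne_zero
    have hfin : Finite (↥C ⧸ (powMonoidHom m : ↥C →* ↥C).range) := by
      haveI : Group.FG (↥C ⧸ (powMonoidHom m : ↥C →* ↥C).range) :=
        Group.fg_of_surjective (f := QuotientGroup.mk' _) (QuotientGroup.mk'_surjective _)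
      apply CommGroup.finite_of_fg_torsion
      intro q
      rw [isOfFinOrder_iff_pow_eq_one]
      refine ⟨m, Nat.pos_of_ne_zero hm, ?_⟩
      obtain ⟨z, rfl⟩ := QuotientGroup.mk'_surjective _ q
      show (QuotientGroup.mk z) ^ m = 1
      rw [← QuotientGroup.mk_pow, QuotientGroup.eq_one_iff]
      exact ⟨z, rfl⟩
    haveI := hfin
    exact Subgroup.index_ne_zero_of_finite
  · intro a b ha hb
    exact hCcomm a b (hAsC ha) (hAsC hb)
  · intro x hx k hk hxk
    obtain ⟨c, rfl⟩ := (hmemAs x).mp hx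
    have h1 : (c ^ m) ^ k = 1 := by
      apply Subtype.ext
      push_cast
      exact hxk
    have h2 : IsOfFinOrder c := by
      rw [isOfFinOrder_iff_pow_eq_one]
      exact ⟨m * k, Nat.pos_of_ne_zero (mul_ne_zero hm hk), by rw [pow_mul]; exact h1⟩
    have h3 : c ^ m = 1 := hkill c h2
    rw [h3]
    rfl

theorem lr_prod_of_virtually_abelian {X Y : Type*} [Group X] [Group Y]
    [Group.FG X] (A : Subgroup X) (hA : A.FiniteIndex)
    (hab : ∀ a b : A, a * b = b * a) (hY : HasLR Y) : HasLR (X × Y) := by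
  classical
  intro H hHfg
  set Q : Subgroup Y := H.map (MonoidHom.snd X Y) with hQ_def
  have hQfg : Q.FG := by
    haveI : Group.FG ↥H := (Group.fg_iff_subgroup_fg H).mpr hHfg
    haveI : Group.FG ↥Q :=
      Group.fg_of_surjective ((MonoidHom.snd X Y).subgroupMap_surjective H)
    exact (Group.fg_iff_subgroup_fg Q).mp ‹_›
  obtain ⟨L, hLfi, hQL, ρY, hρY1, hρY2⟩ := hY Q hQfg
  obtain ⟨As, hAsN, hAsfi, hAscomm, hAstf⟩ := exists_good_abelian A hA hab
  haveI := hAsN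
  set P : Subgroup X := H.map (MonoidHom.fst X Y) with hP_def
  have hmemP : ∀ x : X, x ∈ P ↔ ∃ y : Y, (x, y) ∈ H := by
    intro x
    constructor
    · rintro ⟨⟨x', y⟩, hg, rfl⟩; exact ⟨y, hg⟩
    · rintro ⟨y, hy⟩; exact ⟨(x, y), hy, rfl⟩
  set B : Subgroup X := As ⊓ H.comap (MonoidHom.inl X Y) with hB_def
  have hmemB : ∀ x : X, x ∈ B ↔ (x ∈ As ∧ (x, (1:Y)) ∈ H) := by
    intro x
    rw [hB_def, Subgroup.mem_inf]
    rfl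
  have hBP : ∀ p ∈ P, ∀ b ∈ B, p * b * p⁻¹ ∈ B := by
    intro p hp b hb
    obtain ⟨y, hpy⟩ := (hmemP p).mp hp
    obtain ⟨hbAs, hb1⟩ := (hmemB b).mp hb
    refine (hmemB _).mpr ⟨hAsN.conj_mem b hbAs p, ?_⟩
    have heq : ((p * b * p⁻¹, (1:Y)) : X × Y) = (p, y) * (b, 1) * (p, y)⁻¹ := by
      rw [Prod.ext_iff]
      constructor
      · rfl
      · show (1 : Y) = y * 1 * y⁻¹
        group
    rw [heq]
    exact H.mul_mem (H.mul_mem hpy hb1) (H.inv_mem hpy)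
  obtain ⟨A₀, hA₀A, hA₀fi, hA₀P, t, hthom, htB, htfix, htequiv⟩ :=
    averaged_retract As hAsfi hAscomm hAstf P B inf_le_left hBP
  haveI := hA₀fi
  -- the subgroup K₂ = (A₀ × 1) ⬝ H
  set K₂ : Subgroup (X × Y) :=
    { carrier := {g | ∃ a, a ∈ A₀ ∧ (a⁻¹ * g.1, g.2) ∈ H}
      one_mem' := ⟨1, A₀.one_mem, by simp only [Prod.fst_one, Prod.snd_one, inv_one, one_mul]; exact H.one_mem⟩
      mul_mem' := by
        rintro g g' ⟨a, haA, haH⟩ ⟨a', haA', haH'⟩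
        have hp : a⁻¹ * g.1 ∈ P := (hmemP _).mpr ⟨g.2, haH⟩
        refine ⟨a * ((a⁻¹ * g.1) * a' * (a⁻¹ * g.1)⁻¹), A₀.mul_mem haA (hA₀P _ hp a' haA'), ?_⟩
        have heq : (((a * ((a⁻¹ * g.1) * a' * (a⁻¹ * g.1)⁻¹))⁻¹ * (g * g').1, (g * g').2) : X × Y)
            = (a⁻¹ * g.1, g.2) * (a'⁻¹ * g'.1, g'.2) := by
          rw [Prod.ext_iff]
          constructor
          · show (a * ((a⁻¹ * g.1) * a' * (a⁻¹ * g.1)⁻¹))⁻¹ * (g.1 * g'.1)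
              = (a⁻¹ * g.1) * (a'⁻¹ * g'.1)
            group
          · rfl
        rw [heq]
        exact H.mul_mem haH haH'
      inv_mem' := by
        rintro g ⟨a, haA, haH⟩
        have hp : a⁻¹ * g.1 ∈ P := (hmemP _).mpr ⟨g.2, haH⟩
        refine ⟨g.1⁻¹ * a⁻¹ * g.1, ?_, ?_⟩
        · have h1 : g.1⁻¹ * a⁻¹ * g.1 = (a⁻¹ * g.1)⁻¹ * a⁻¹ * ((a⁻¹ * g.1)⁻¹)⁻¹ := by group
          rw [h1]
          exact hA₀P _ (P.inv_mem hp) a⁻¹ (A₀.inv_mem haA)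
        · have heq : (((g.1⁻¹ * a⁻¹ * g.1)⁻¹ * (g⁻¹).1, (g⁻¹).2) : X × Y)
              = ((a⁻¹ * g.1, g.2) : X × Y)⁻¹ := by
            rw [Prod.ext_iff]
            constructor
            · show (g.1⁻¹ * a⁻¹ * g.1)⁻¹ * g.1⁻¹ = (a⁻¹ * g.1)⁻¹
              group
            · rfl
          rw [heq]
          exact H.inv_mem haH } with hK₂_def
  have hK₂mem : ∀ g : X × Y, g ∈ K₂ → ∃ a, a ∈ A₀ ∧ (a⁻¹ * g.1, g.2) ∈ H := fun g hg => hg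
  have hK₂mem' : ∀ g : X × Y, (∃ a, a ∈ A₀ ∧ (a⁻¹ * g.1, g.2) ∈ H) → g ∈ K₂ := fun g hg => hg
  have hHK₂ : H ≤ K₂ := by
    intro g hg
    exact hK₂mem' g ⟨1, A₀.one_mem, by simpa using hg⟩
  -- well-definedness of the retraction formula
  have wd : ∀ (g : X × Y) (a a' : X), a ∈ A₀ → a' ∈ A₀ →
      (a⁻¹ * g.1, g.2) ∈ H → (a'⁻¹ * g.1, g.2) ∈ H →
      t a * a⁻¹ * g.1 = t a' * a'⁻¹ * g.1 := by
    intro g a a' ha ha' hH1 hH'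
    have hz : ((a'⁻¹ * a : X), (1 : Y)) ∈ H := by
      have heq : (((a'⁻¹ * a : X), (1:Y)) : X × Y)
          = (a'⁻¹ * g.1, g.2) * ((a⁻¹ * g.1, g.2) : X × Y)⁻¹ := by
        rw [Prod.ext_iff]
        constructor
        · show a'⁻¹ * a = (a'⁻¹ * g.1) * (a⁻¹ * g.1)⁻¹
          group
        · show (1:Y) = g.2 * g.2⁻¹
          group
      rw [heq]
      exact H.mul_mem hH' (H.inv_mem hH1)
    have hzA : a'⁻¹ * a ∈ A₀ := A₀.mul_mem (A₀.inv_mem ha') ha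
    have hzB : a'⁻¹ * a ∈ B := (hmemB _).mpr ⟨hA₀A hzA, hz⟩
    have hfix := htfix _ hzB hzA
    have hmul := hthom a' ha' (a'⁻¹ * a) hzA
    have h2 : a' * (a'⁻¹ * a) = a := by group
    rw [h2] at hmul
    rw [hmul, hfix]
    group
  let ch : ↥K₂ → X := fun k => (hK₂mem _ k.2).choose
  have hch : ∀ k : ↥K₂, ch k ∈ A₀ ∧ ((ch k)⁻¹ * (k : X × Y).1, (k : X × Y).2) ∈ H :=
    fun k => (hK₂mem _ k.2).choose_spec
  let f₂ : ↥K₂ → X × Y := fun k => (t (ch k) * (ch k)⁻¹ * (k : X × Y).1, (k : X × Y).2)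
  have hf₂wd : ∀ (k : ↥K₂) (a : X), a ∈ A₀ → ((a⁻¹ * (k : X × Y).1, (k : X × Y).2) ∈ H) →
      f₂ k = (t a * a⁻¹ * (k : X × Y).1, (k : X × Y).2) := by
    intro k a ha hHk
    have h1 := wd (k : X × Y) (ch k) a (hch k).1 ha (hch k).2 hHk
    show (t (ch k) * (ch k)⁻¹ * (k : X × Y).1, (k : X × Y).2) = _
    rw [h1]
  have hf₂mul : ∀ k k' : ↥K₂, f₂ (k * k') = f₂ k * f₂ k' := by
    intro k k'
    obtain ⟨ha, hH1⟩ := hch k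
    obtain ⟨ha', hH'⟩ := hch k'
    have hp : (ch k)⁻¹ * (k : X × Y).1 ∈ P := (hmemP _).mpr ⟨(k : X × Y).2, hH1⟩
    set a := ch k with ha_def
    set a' := ch k' with ha'_def
    set g : X × Y := (k : X × Y) with hg_def
    set g' : X × Y := (k' : X × Y) with hg'_def
    set a'' := a * ((a⁻¹ * g.1) * a' * (a⁻¹ * g.1)⁻¹) with ha''_def
    have ha'' : a'' ∈ A₀ := A₀.mul_mem ha (hA₀P _ hp a' ha')
    have hH'' : (a''⁻¹ * ((k * k' : ↥K₂) : X × Y).1, ((k * k' : ↥K₂) : X × Y).2) ∈ H := by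
      have heq : ((a''⁻¹ * ((k * k' : ↥K₂) : X × Y).1, ((k * k' : ↥K₂) : X × Y).2) : X × Y)
          = (a⁻¹ * g.1, g.2) * (a'⁻¹ * g'.1, g'.2) := by
        rw [Prod.ext_iff]
        constructor
        · show a''⁻¹ * (g.1 * g'.1) = (a⁻¹ * g.1) * (a'⁻¹ * g'.1)
          rw [ha''_def]
          group
        · rfl
      rw [heq]
      exact H.mul_mem hH1 hH'
    rw [hf₂wd (k * k') a'' ha'' hH'']
    show (t a'' * a''⁻¹ * (g.1 * g'.1), g.2 * g'.2)
        = (t a * a⁻¹ * g.1, g.2) * (t a' * a'⁻¹ * g'.1, g'.2)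
    rw [Prod.ext_iff]
    constructor
    · show t a'' * a''⁻¹ * (g.1 * g'.1) = (t a * a⁻¹ * g.1) * (t a' * a'⁻¹ * g'.1)
      have hteq : t a'' = t a * ((a⁻¹ * g.1) * t a' * (a⁻¹ * g.1)⁻¹) := by
        rw [ha''_def, hthom a ha _ (hA₀P _ hp a' ha'), htequiv _ hp a' ha']
      rw [hteq, ha''_def]
      group
    · rfl
  let ρ₂ : ↥K₂ →* X × Y := MonoidHom.mk' f₂ hf₂mul
  have hρ₂H : ∀ k : ↥K₂, ρ₂ k ∈ H := by
    intro k
    obtain ⟨ha, hH1⟩ := hch k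
    have htB' : (t (ch k), (1:Y)) ∈ H := ((hmemB _).mp (htB (ch k) ha)).2
    have heq : ρ₂ k = ((t (ch k), (1:Y)) : X × Y) * ((ch k)⁻¹ * (k : X × Y).1, (k : X × Y).2) := by
      show (t (ch k) * (ch k)⁻¹ * (k : X × Y).1, (k : X × Y).2) = _
      rw [Prod.ext_iff]
      constructor
      · show t (ch k) * (ch k)⁻¹ * (k : X × Y).1 = t (ch k) * ((ch k)⁻¹ * (k : X × Y).1)
        group
      · show (k : X × Y).2 = 1 * (k : X × Y).2
        group
    rw [heq]
    exact H.mul_mem htB' hH1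
  have hρ₂fix : ∀ k : ↥K₂, (k : X × Y) ∈ H → ρ₂ k = k := by
    intro k hk
    have h1 : ((1:X)⁻¹ * (k : X × Y).1, (k : X × Y).2) ∈ H := by
      simpa using hk
    have h2 : ρ₂ k = (t 1 * (1:X)⁻¹ * (k : X × Y).1, (k : X × Y).2) := hf₂wd k 1 A₀.one_mem h1
    rw [h2, htfix 1 B.one_mem A₀.one_mem]
    rw [Prod.ext_iff]
    constructor
    · show 1 * (1:X)⁻¹ * (k : X × Y).1 = (k : X × Y).1
      group
    · rfl
  -- the ambient subgroups
  set MQ : Subgroup (X × Y) := (⊤ : Subgroup X).prod Q with hMQ_def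
  set K₁ : Subgroup (X × Y) := (⊤ : Subgroup X).prod L with hK₁_def
  have hMK₁ : MQ ≤ K₁ := Subgroup.prod_mono (le_refl ⊤) hQL
  have hHM : H ≤ MQ := by
    intro g hg
    exact Subgroup.mem_prod.mpr ⟨trivial, ⟨g, hg, rfl⟩⟩
  haveI hK₁fi : K₁.FiniteIndex := by
    constructor
    rw [hK₁_def, Subgroup.top_prod, Subgroup.index_comap]
    have hsurj : Function.Surjective (MonoidHom.snd X Y) := fun y => ⟨(1, y), rfl⟩
    rw [MonoidHom.range_eq_top.mpr hsurj, Subgroup.relIndex_top_right]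
    exact hLfi.index_ne_zero
  -- σ : K₁ → X × Y
  let σ : ↥K₁ →* X × Y := MonoidHom.mk'
    (fun k => ((k : X × Y).1, ρY ⟨(k : X × Y).2, (Subgroup.mem_prod.mp k.2).2⟩))
    (by
      intro k k'
      rw [Prod.ext_iff]
      refine ⟨rfl, ?_⟩
      show ρY _ = ρY _ * ρY _
      rw [← map_mul]
      exact congrArg ρY (Subtype.ext rfl))
  have hσM : ∀ k : ↥K₁, σ k ∈ MQ := by
    intro k
    exact Subgroup.mem_prod.mpr ⟨trivial, hρY1 _⟩
  have hσfix : ∀ k : ↥K₁, (k : X × Y) ∈ MQ → σ k = k := by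
    intro k hk
    show ((k : X × Y).1, ρY ⟨(k : X × Y).2, _⟩) = (k : X × Y)
    rw [Prod.ext_iff]
    refine ⟨rfl, ?_⟩
    exact hρY2 _ ((Subgroup.mem_prod.mp hk).2)
  have hK₂MQ : K₂ ≤ MQ := by
    intro g hg
    obtain ⟨a, _, haH⟩ := hK₂mem g hg
    refine Subgroup.mem_prod.mpr ⟨trivial, ?_⟩
    exact ⟨(a⁻¹ * g.1, g.2), haH, rfl⟩
  -- relative index of K₂ in MQ is finite
  have hrel : K₂.relIndex MQ ≠ 0 := by
    show (K₂.subgroupOf MQ).index ≠ 0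
    have hmemMQ : ∀ v : X, ((v, (1:Y)) : X × Y) ∈ MQ :=
      fun v => Subgroup.mem_prod.mpr ⟨trivial, Q.one_mem⟩
    have hF0 : ∀ v v' : X, v⁻¹ * v' ∈ A₀ →
        (QuotientGroup.mk (⟨(v, 1), hmemMQ v⟩ : ↥MQ) : ↥MQ ⧸ K₂.subgroupOf MQ)
          = QuotientGroup.mk (⟨(v', 1), hmemMQ v'⟩ : ↥MQ) := by
      intro v v' hvv
      apply (QuotientGroup.eq).mpr
      rw [Subgroup.mem_subgroupOf]
      refine hK₂mem' _ ⟨v⁻¹ * v', hvv, ?_⟩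
      have heq : (((v⁻¹ * v')⁻¹ *
          (((⟨(v, 1), hmemMQ v⟩ : ↥MQ)⁻¹ * ⟨(v', 1), hmemMQ v'⟩ : ↥MQ) : X × Y).1,
          (((⟨(v, 1), hmemMQ v⟩ : ↥MQ)⁻¹ * ⟨(v', 1), hmemMQ v'⟩ : ↥MQ) : X × Y).2) : X × Y)
          = (1, 1) := by
        rw [Prod.ext_iff]
        constructor
        · show (v⁻¹ * v')⁻¹ * (v⁻¹ * v') = 1
          group
        · show (1 : Y)⁻¹ * 1 = 1
          group
      rw [heq]
      exact H.one_mem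
    let F : (X ⧸ A₀) → (↥MQ ⧸ K₂.subgroupOf MQ) :=
      Quotient.lift (fun v => QuotientGroup.mk (⟨(v, 1), hmemMQ v⟩ : ↥MQ))
        (fun v v' hvv => hF0 v v' (QuotientGroup.leftRel_apply.mp hvv))
    have hFsurj : Function.Surjective F := by
      intro q
      obtain ⟨m, rfl⟩ := QuotientGroup.mk_surjective q
      obtain ⟨hm1, hm2⟩ := Subgroup.mem_prod.mp m.2
      obtain ⟨gh, hghH, hgh2⟩ := hm2
      refine ⟨QuotientGroup.mk ((m : X × Y).1 * gh.1⁻¹), ?_⟩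
      show (QuotientGroup.mk (⟨((m : X × Y).1 * gh.1⁻¹, 1), _⟩ : ↥MQ)
          : ↥MQ ⧸ K₂.subgroupOf MQ) = QuotientGroup.mk m
      apply (QuotientGroup.eq).mpr
      rw [Subgroup.mem_subgroupOf]
      have hcoe : (((⟨((m : X × Y).1 * gh.1⁻¹, 1), hmemMQ _⟩ : ↥MQ)⁻¹ * m : ↥MQ) : X × Y)
          = gh := by
        rw [Prod.ext_iff]
        constructor
        · show ((m : X × Y).1 * gh.1⁻¹)⁻¹ * (m : X × Y).1 = gh.1
          group
        · show (1 : Y)⁻¹ * (m : X × Y).2 = gh.2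
          rw [← hgh2]
          show (1 : Y)⁻¹ * ((MonoidHom.snd X Y) gh) = gh.2
          rw [inv_one, one_mul]
          rfl
      rw [hcoe]
      exact hHK₂ hghH
    have hfin : Finite (↥MQ ⧸ K₂.subgroupOf MQ) := Finite.of_surjective F hFsurj
    haveI := hfin
    exact Subgroup.index_ne_zero_of_finite
  exact isVirtualRetract_step H MQ K₁ K₂ hK₁fi hMK₁ σ hσM hσfix hHM hHK₂ hrel ρ₂ hρ₂H hρ₂fix
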